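/- Let M be a topological space with basepoint x₀, let U ⊆ M be a subset containing x₀, and let R_U : [0,1] × U → U be a continuous map with R_U(0,x) = x and R_U(1,x) = x₀ for all x ∈ U, and R_U(t,x₀) = x₀ for all t ∈ [0,1]. Let e⁻¹(U) := {γ ∈ ΩM : γ(1/2) ∈ U}. Then the map R : e⁻¹(U) → 𝓕 defined by R(γ)(t) = γ(2t) for t ∈ [0,1/4], R(γ)(t) = R_U(4t−1, γ(1/2)) for t ∈ [1/4,1/2], R(γ)(t) = R_U(3−4t, γ(1/2)) for t ∈ [1/2,3/4], and R(γ)(t) = γ(2t−1) for t ∈ [3/4,1], is a well-defined continuous map and is a homotopy inverse to the inclusion 𝓕 ↪ e⁻¹(U). -/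

import Mathlib

open Set

/-- The based loop space of `M` at `x₀`: continuous maps `[0,1] → M` sending both
endpoints to `x₀`, with the compact-open topology. -/
abbrev OmegaLoop (M : Type*) [TopologicalSpace M] (x₀ : M) : Type _ :=
  {γ : C(unitInterval, M) // γ 0 = x₀ ∧ γ 1 = x₀}

/-- The midpoint `1/2` of the unit interval. -/
noncomputable def half : unitInterval := ⟨1/2, by norm_num⟩

/-- The figure-eight space `𝓕 = {γ ∈ ΩM : γ(1/2) = x₀}`. -/
abbrev FigureEight (M : Type*) [TopologicalSpace M] (x₀ : M) : Type _ :=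
  {γ : OmegaLoop M x₀ // γ.1 half = x₀}

/-- The subspace `e⁻¹(U) = {γ ∈ ΩM : γ(1/2) ∈ U}`. -/
abbrev EvalPreimage (M : Type*) [TopologicalSpace M] (x₀ : M) (U : Set M) : Type _ :=
  {γ : OmegaLoop M x₀ // γ.1 half ∈ U}

/-- The inclusion `𝓕 ↪ e⁻¹(U)`, given `x₀ ∈ U`. -/
def figureEightInclusion (M : Type*) [TopologicalSpace M] (x₀ : M) (U : Set M)
    (hU : x₀ ∈ U) : C(FigureEight M x₀, EvalPreimage M x₀ U) :=
  ⟨fun γ => ⟨γ.1, by rw [γ.2]; exact hU⟩,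
    Continuous.subtype_mk continuous_subtype_val fun γ => by rw [γ.2]; exact hU⟩

namespace RetractionAux

noncomputable abbrev pr (r : ℝ) : unitInterval := projIcc 0 1 zero_le_one r

lemma pr_zero : pr 0 = 0 := projIcc_left _
lemma pr_one : pr 1 = 1 := projIcc_right _
lemma pr_half : pr (1/2) = half := projIcc_of_mem _ (by norm_num)
lemma pr_coe (t : unitInterval) : pr (t : ℝ) = t := projIcc_val _ _

variable {M : Type*} [TopologicalSpace M]

noncomputable def HFun (x₀ : M) (U : Set M) (RU : C(unitInterval × U, U)) :
    (unitInterval × EvalPreimage M x₀ U) × unitInterval → M := fun p =>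
  if (p.2 : ℝ) ≤ 1 / 2 then
    if 4 * (p.2 : ℝ) ≤ 2 - (p.1.1 : ℝ) then
      p.1.2.1.1 (pr (2 * (p.2 : ℝ) / (2 - (p.1.1 : ℝ))))
    else (RU (pr (4 * (p.2 : ℝ) - 2 + (p.1.1 : ℝ)), ⟨p.1.2.1.1 half, p.1.2.2⟩) : M)
  else
    if 4 * (p.2 : ℝ) ≤ 2 + (p.1.1 : ℝ) then
      (RU (pr (2 + (p.1.1 : ℝ) - 4 * (p.2 : ℝ)), ⟨p.1.2.1.1 half, p.1.2.2⟩) : M)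
    else p.1.2.1.1 (pr ((2 * (p.2 : ℝ) - (p.1.1 : ℝ)) / (2 - (p.1.1 : ℝ))))

variable {x₀ : M} {U : Set M} {RU : C(unitInterval × U, U)}

lemma two_sub_ne (s : unitInterval) : (2 : ℝ) - (s : ℝ) ≠ 0 := by
  have := s.2.2; nlinarith

lemma continuous_HFun (x₀ : M) (U : Set M) (RU : C(unitInterval × U, U))
    (hRU0 : ∀ x : U, RU (0, x) = x) : Continuous (HFun x₀ U RU) := by
  have hs : Continuous fun p : (unitInterval × EvalPreimage M x₀ U) × unitInterval =>
      ((p.1.1 : ℝ)) := continuous_subtype_val.comp (continuous_fst.comp continuous_fst)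
  have ht : Continuous fun p : (unitInterval × EvalPreimage M x₀ U) × unitInterval =>
      ((p.2 : ℝ)) := continuous_subtype_val.comp continuous_snd
  have hγ : Continuous fun p : (unitInterval × EvalPreimage M x₀ U) × unitInterval =>
      (p.1.2.1.1 : C(unitInterval, M)) :=
    continuous_subtype_val.comp (continuous_subtype_val.comp
      (continuous_snd.comp continuous_fst))
  have hγhalf : Continuous fun p : (unitInterval × EvalPreimage M x₀ U) × unitInterval =>
      (⟨p.1.2.1.1 half, p.1.2.2⟩ : U) :=
    Continuous.subtype_mk ((continuous_eval_const half).comp hγ) _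
  have hden : ∀ p : (unitInterval × EvalPreimage M x₀ U) × unitInterval,
      (2 : ℝ) - (p.1.1 : ℝ) ≠ 0 := fun p => two_sub_ne _
  have heval : ∀ f : ((unitInterval × EvalPreimage M x₀ U) × unitInterval) → ℝ,
      Continuous f → Continuous fun p : (unitInterval × EvalPreimage M x₀ U) × unitInterval
        => p.1.2.1.1 (pr (f p)) := by
    intro f hf
    have hpr : Continuous pr := continuous_projIcc
    exact continuous_eval.comp (hγ.prodMk (hpr.comp hf))
  have hRUc : ∀ f : ((unitInterval × EvalPreimage M x₀ U) × unitInterval) → ℝ,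
      Continuous f → Continuous fun p : (unitInterval × EvalPreimage M x₀ U) × unitInterval
        => (RU (pr (f p), ⟨p.1.2.1.1 half, p.1.2.2⟩) : M) := by
    intro f hf
    have hpr : Continuous pr := continuous_projIcc
    exact continuous_subtype_val.comp
      (RU.continuous.comp ((hpr.comp hf).prodMk hγhalf))
  have hA : Continuous fun p : (unitInterval × EvalPreimage M x₀ U) × unitInterval =>
      p.1.2.1.1 (pr (2 * (p.2 : ℝ) / (2 - (p.1.1 : ℝ)))) :=
    heval _ (((continuous_const.mul ht).div (continuous_const.sub hs) hden))
  have hB : Continuous fun p : (unitInterval × EvalPreimage M x₀ U) × unitInterval =>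
      (RU (pr (4 * (p.2 : ℝ) - 2 + (p.1.1 : ℝ)), ⟨p.1.2.1.1 half, p.1.2.2⟩) : M) :=
    hRUc _ (((continuous_const.mul ht).sub continuous_const).add hs)
  have hC : Continuous fun p : (unitInterval × EvalPreimage M x₀ U) × unitInterval =>
      (RU (pr (2 + (p.1.1 : ℝ) - 4 * (p.2 : ℝ)), ⟨p.1.2.1.1 half, p.1.2.2⟩) : M) :=
    hRUc _ ((continuous_const.add hs).sub (continuous_const.mul ht))
  have hD : Continuous fun p : (unitInterval × EvalPreimage M x₀ U) × unitInterval =>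
      p.1.2.1.1 (pr ((2 * (p.2 : ℝ) - (p.1.1 : ℝ)) / (2 - (p.1.1 : ℝ)))) :=
    heval _ (((continuous_const.mul ht).sub hs).div (continuous_const.sub hs) hden)
  have hf : Continuous fun p : (unitInterval × EvalPreimage M x₀ U) × unitInterval =>
      if 4 * (p.2 : ℝ) ≤ 2 - (p.1.1 : ℝ) then
        p.1.2.1.1 (pr (2 * (p.2 : ℝ) / (2 - (p.1.1 : ℝ))))
      else (RU (pr (4 * (p.2 : ℝ) - 2 + (p.1.1 : ℝ)), ⟨p.1.2.1.1 half, p.1.2.2⟩) : M) := by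
    refine Continuous.if_le hA hB (continuous_const.mul ht) (continuous_const.sub hs) ?_
    intro p hp
    have h1 : 2 * (p.2 : ℝ) / (2 - (p.1.1 : ℝ)) = 1/2 := by
      rw [div_eq_iff (two_sub_ne _)]; linarith
    have h2 : 4 * (p.2 : ℝ) - 2 + (p.1.1 : ℝ) = 0 := by linarith
    rw [h1, h2, pr_half, pr_zero, hRU0]
  have hg : Continuous fun p : (unitInterval × EvalPreimage M x₀ U) × unitInterval =>
      if 4 * (p.2 : ℝ) ≤ 2 + (p.1.1 : ℝ) then
        (RU (pr (2 + (p.1.1 : ℝ) - 4 * (p.2 : ℝ)), ⟨p.1.2.1.1 half, p.1.2.2⟩) : M)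
      else p.1.2.1.1 (pr ((2 * (p.2 : ℝ) - (p.1.1 : ℝ)) / (2 - (p.1.1 : ℝ)))) := by
    refine Continuous.if_le hC hD (continuous_const.mul ht) (continuous_const.add hs) ?_
    intro p hp
    have h1 : (2 * (p.2 : ℝ) - (p.1.1 : ℝ)) / (2 - (p.1.1 : ℝ)) = 1/2 := by
      rw [div_eq_iff (two_sub_ne _)]; linarith
    have h2 : 2 + (p.1.1 : ℝ) - 4 * (p.2 : ℝ) = 0 := by linarith
    rw [h1, h2, pr_half, pr_zero, hRU0]
  refine Continuous.if_le hf hg ht continuous_const ?_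
  intro p hp
  rcases eq_or_lt_of_le (p.1.1.2.1 : (0:ℝ) ≤ (p.1.1 : ℝ)) with hs0 | hs0
  · have c1 : 4 * (p.2 : ℝ) ≤ 2 - (p.1.1 : ℝ) := by rw [hp, ← hs0]; norm_num
    have c2 : 4 * (p.2 : ℝ) ≤ 2 + (p.1.1 : ℝ) := by rw [hp, ← hs0]; norm_num
    rw [if_pos c1, if_pos c2]
    have h1 : 2 * (p.2 : ℝ) / (2 - (p.1.1 : ℝ)) = 1/2 := by rw [hp, ← hs0]; norm_num
    have h2 : 2 + (p.1.1 : ℝ) - 4 * (p.2 : ℝ) = 0 := by rw [hp, ← hs0]; norm_num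
    rw [h1, h2, pr_half, pr_zero, hRU0]
  · have c1 : ¬ (4 * (p.2 : ℝ) ≤ 2 - (p.1.1 : ℝ)) := by rw [hp]; push_neg; linarith
    have c2 : 4 * (p.2 : ℝ) ≤ 2 + (p.1.1 : ℝ) := by rw [hp]; linarith
    rw [if_neg c1, if_pos c2]
    have h12 : 4 * (p.2 : ℝ) - 2 + (p.1.1 : ℝ) = 2 + (p.1.1 : ℝ) - 4 * (p.2 : ℝ) := by
      rw [hp]; ring
    rw [h12]

variable {M : Type*} [TopologicalSpace M] {x₀ : M} {U : Set M} {RU : C(unitInterval × U, U)}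

lemma HFun_zero (s : unitInterval) (γ : EvalPreimage M x₀ U) :
    HFun x₀ U RU ((s, γ), 0) = x₀ := by
  have hs := s.2.2
  have h1 : ((0 : unitInterval) : ℝ) ≤ 1/2 := by norm_num
  have hc : ((0 : unitInterval) : ℝ) = 0 := rfl
  have h2 : 4 * ((0 : unitInterval) : ℝ) ≤ 2 - (s : ℝ) := by rw [hc]; linarith
  have h3 : 2 * ((0 : unitInterval) : ℝ) / (2 - (s : ℝ)) = 0 := by rw [hc]; simp
  simp only [HFun, if_pos h1, if_pos h2, h3, pr_zero]
  exact γ.1.2.1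

lemma HFun_one (s : unitInterval) (γ : EvalPreimage M x₀ U) :
    HFun x₀ U RU ((s, γ), 1) = x₀ := by
  have hs := s.2.1
  have h1 : ¬ (((1 : unitInterval) : ℝ) ≤ 1/2) := by norm_num
  have hc : ((1 : unitInterval) : ℝ) = 1 := rfl
  have h2 : ¬ (4 * ((1 : unitInterval) : ℝ) ≤ 2 + (s : ℝ)) := by
    rw [hc]; push_neg; linarith [s.2.2]
  have h3 : (2 * ((1 : unitInterval) : ℝ) - (s : ℝ)) / (2 - (s : ℝ)) = 1 := by
    rw [hc, div_eq_one_iff_eq (two_sub_ne s)]; ring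
  simp only [HFun, if_neg h1, if_neg h2, h3, pr_one]
  exact γ.1.2.2

lemma HFun_half (hRU0 : ∀ x : U, RU (0, x) = x) (s : unitInterval)
    (γ : EvalPreimage M x₀ U) :
    HFun x₀ U RU ((s, γ), half) = (RU (pr (s : ℝ), ⟨γ.1.1 half, γ.2⟩) : M) := by
  have hhalf : ((half : unitInterval) : ℝ) = 1/2 := rfl
  have h1 : ((half : unitInterval) : ℝ) ≤ 1/2 := by rw [hhalf]
  by_cases hs : (s : ℝ) ≤ 0
  · have hs0 : (s : ℝ) = 0 := le_antisymm hs s.2.1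
    have h2 : 4 * ((half : unitInterval) : ℝ) ≤ 2 - (s : ℝ) := by
      rw [hhalf, hs0]; norm_num
    have h3 : 2 * ((half : unitInterval) : ℝ) / (2 - (s : ℝ)) = 1/2 := by
      rw [hhalf, hs0]; norm_num
    simp only [HFun, if_pos h1, if_pos h2, h3, pr_half]
    rw [hs0, pr_zero, hRU0]
  · have h2 : ¬ (4 * ((half : unitInterval) : ℝ) ≤ 2 - (s : ℝ)) := by
      rw [hhalf]; push_neg; linarith [lt_of_not_ge hs]
    have h3 : 4 * ((half : unitInterval) : ℝ) - 2 + (s : ℝ) = (s : ℝ) := by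
      rw [hhalf]; ring
    simp only [HFun, if_pos h1, if_neg h2, h3]

lemma HFun_s0 (γ : EvalPreimage M x₀ U) (t : unitInterval) :
    HFun x₀ U RU (((0 : unitInterval), γ), t) = γ.1.1 t := by
  have hc : ((0 : unitInterval) : ℝ) = 0 := rfl
  by_cases ht : (t : ℝ) ≤ 1/2
  · have h2 : 4 * (t : ℝ) ≤ 2 - ((0 : unitInterval) : ℝ) := by rw [hc]; linarith
    have h3 : 2 * (t : ℝ) / (2 - ((0 : unitInterval) : ℝ)) = (t : ℝ) := by
      rw [hc]; ring
    simp only [HFun, if_pos ht, if_pos h2, h3, pr_coe]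
  · have h2 : ¬ (4 * (t : ℝ) ≤ 2 + ((0 : unitInterval) : ℝ)) := by
      rw [hc]; push_neg; linarith [lt_of_not_ge ht]
    have h3 : (2 * (t : ℝ) - ((0 : unitInterval) : ℝ)) / (2 - ((0 : unitInterval) : ℝ))
        = (t : ℝ) := by rw [hc]; ring
    simp only [HFun, if_neg ht, if_neg h2, h3, pr_coe]

variable {M : Type*} [TopologicalSpace M]

noncomputable def Hcm (x₀ : M) (U : Set M) (RU : C(unitInterval × U, U))
    (hRU0 : ∀ x : U, RU (0, x) = x) :
    C((unitInterval × EvalPreimage M x₀ U) × unitInterval, M) :=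
  ⟨HFun x₀ U RU, continuous_HFun x₀ U RU hRU0⟩

noncomputable def Lmap (x₀ : M) (U : Set M) (RU : C(unitInterval × U, U))
    (hRU0 : ∀ x : U, RU (0, x) = x) :
    C(unitInterval × EvalPreimage M x₀ U, EvalPreimage M x₀ U) :=
  ⟨fun p => ⟨⟨(Hcm x₀ U RU hRU0).curry p, HFun_zero p.1 p.2, HFun_one p.1 p.2⟩, by
      show HFun x₀ U RU ((p.1, p.2), half) ∈ U
      rw [HFun_half hRU0]; exact (RU _).2⟩, by
    refine Continuous.subtype_mk (Continuous.subtype_mk ?_ _) _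
    exact (Hcm x₀ U RU hRU0).curry.continuous⟩


variable {M : Type*} [TopologicalSpace M]

noncomputable def Rmap (x₀ : M) (U : Set M) (RU : C(unitInterval × U, U))
    (hRU0 : ∀ x : U, RU (0, x) = x) (hRU1 : ∀ x : U, (RU (1, x) : M) = x₀) :
    C(EvalPreimage M x₀ U, FigureEight M x₀) :=
  ⟨fun γ => ⟨(Lmap x₀ U RU hRU0 (1, γ)).1, by
      show HFun x₀ U RU (((1 : unitInterval), γ), half) = x₀
      rw [HFun_half hRU0, pr_coe, hRU1]⟩, by
    refine Continuous.subtype_mk ?_ _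
    exact continuous_subtype_val.comp ((Lmap x₀ U RU hRU0).continuous.comp
      (continuous_const.prodMk continuous_id))⟩

end RetractionAux

open RetractionAux

/-- Given a retraction-type homotopy `R_U : [0,1] × U → U` with
`R_U(0,x) = x`, `R_U(1,x) = x₀`, `R_U(t,x₀) = x₀`, the map `R : e⁻¹(U) → 𝓕` defined by
the explicit piecewise formulas is a well-defined continuous map and is a homotopy

inverse to the inclusion `𝓕 ↪ e⁻¹(U)`. -/
theorem retraction_homotopy_inverse
    {M : Type*} [TopologicalSpace M] (x₀ : M) (U : Set M) (hU : x₀ ∈ U)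
    (RU : C(unitInterval × U, U))
    (hRU0 : ∀ x : U, RU (0, x) = x)
    (hRU1 : ∀ x : U, (RU (1, x) : M) = x₀)
    (hRUfix : ∀ t : unitInterval, (RU (t, ⟨x₀, hU⟩) : M) = x₀) :
    ∃ R : C(EvalPreimage M x₀ U, FigureEight M x₀),
      (∀ (γ : EvalPreimage M x₀ U) (t : unitInterval),
        ((t : ℝ) ≤ 1/4 → (R γ).1.1 t = γ.1.1 (projIcc 0 1 zero_le_one (2 * (t : ℝ)))) ∧
        (1/4 ≤ (t : ℝ) → (t : ℝ) ≤ 1/2 →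
          (R γ).1.1 t =
            (RU (projIcc 0 1 zero_le_one (4 * (t : ℝ) - 1), ⟨γ.1.1 half, γ.2⟩) : M)) ∧
        (1/2 ≤ (t : ℝ) → (t : ℝ) ≤ 3/4 →
          (R γ).1.1 t =
            (RU (projIcc 0 1 zero_le_one (3 - 4 * (t : ℝ)), ⟨γ.1.1 half, γ.2⟩) : M)) ∧
        (3/4 ≤ (t : ℝ) →
          (R γ).1.1 t = γ.1.1 (projIcc 0 1 zero_le_one (2 * (t : ℝ) - 1)))) ∧
      ((figureEightInclusion M x₀ U hU).comp R).Homotopic (ContinuousMap.id _) ∧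
      (R.comp (figureEightInclusion M x₀ U hU)).Homotopic (ContinuousMap.id _) := by
  
  have s1 : ((1 : unitInterval) : ℝ) = 1 := rfl
  refine ⟨Rmap x₀ U RU hRU0 hRU1, ?_, ?_, ?_⟩
  · intro γ t
    have hval : ∀ t : unitInterval,
        ((Rmap x₀ U RU hRU0 hRU1) γ).1.1 t = HFun x₀ U RU (((1 : unitInterval), γ), t) :=
      fun _ => rfl
    refine ⟨?_, ?_, ?_, ?_⟩
    · intro ht
      have h1 : (t : ℝ) ≤ 1/2 := by linarith
      have h2 : 4 * (t : ℝ) ≤ 2 - ((1 : unitInterval) : ℝ) := by rw [s1]; linarith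
      have h3 : 2 * (t : ℝ) / (2 - ((1 : unitInterval) : ℝ)) = 2 * (t : ℝ) := by
        rw [s1]; ring
      rw [hval]
      simp only [HFun, if_pos h1, if_pos h2, h3]
    · intro h14 h12
      rw [hval]
      by_cases hc : 4 * (t : ℝ) ≤ 2 - ((1 : unitInterval) : ℝ)
      · rw [s1] at hc
        have ht4 : (t : ℝ) = 1/4 := by linarith
        have h3 : 2 * (t : ℝ) / (2 - ((1 : unitInterval) : ℝ)) = 1/2 := by
          rw [s1, ht4]; norm_num
        have h4 : 4 * (t : ℝ) - 1 = 0 := by rw [ht4]; norm_num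
        have hc' : 4 * (t : ℝ) ≤ 2 - ((1 : unitInterval) : ℝ) := by rw [s1]; linarith
        simp only [HFun, if_pos h12, if_pos hc', h3, pr_half, h4]
        rw [show projIcc (0:ℝ) 1 zero_le_one 0 = (0 : unitInterval) from pr_zero, hRU0]
      · have h4 : 4 * (t : ℝ) - 2 + ((1 : unitInterval) : ℝ) = 4 * (t : ℝ) - 1 := by
          rw [s1]; ring
        simp only [HFun, if_pos h12, if_neg hc, h4]
    · intro h12 h34
      rw [hval]
      by_cases hc : (t : ℝ) ≤ 1/2
      · have ht2 : (t : ℝ) = 1/2 := le_antisymm hc h12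
        have h2 : ¬ (4 * (t : ℝ) ≤ 2 - ((1 : unitInterval) : ℝ)) := by
          rw [s1, ht2]; norm_num
        have h4 : 4 * (t : ℝ) - 2 + ((1 : unitInterval) : ℝ) = 3 - 4 * (t : ℝ) := by
          rw [s1, ht2]; norm_num
        simp only [HFun, if_pos hc, if_neg h2, h4]
      · have h2 : 4 * (t : ℝ) ≤ 2 + ((1 : unitInterval) : ℝ) := by rw [s1]; linarith
        have h4 : 2 + ((1 : unitInterval) : ℝ) - 4 * (t : ℝ) = 3 - 4 * (t : ℝ) := by
          rw [s1]; ring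
        simp only [HFun, if_neg hc, if_pos h2, h4]
    · intro h34
      rw [hval]
      have hc : ¬ ((t : ℝ) ≤ 1/2) := by push_neg; linarith
      by_cases h2 : 4 * (t : ℝ) ≤ 2 + ((1 : unitInterval) : ℝ)
      · rw [s1] at h2
        have ht3 : (t : ℝ) = 3/4 := by linarith
        have h4 : 2 + ((1 : unitInterval) : ℝ) - 4 * (t : ℝ) = 0 := by
          rw [s1, ht3]; norm_num
        have h2' : 4 * (t : ℝ) ≤ 2 + ((1 : unitInterval) : ℝ) := by rw [s1]; linarith
        have h5 : 2 * (t : ℝ) - 1 = 1/2 := by rw [ht3]; norm_num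
        simp only [HFun, if_neg hc, if_pos h2', h4, pr_zero, hRU0, h5]
        rw [show projIcc (0:ℝ) 1 zero_le_one (1/2) = half from pr_half]
      · have h4 : (2 * (t : ℝ) - ((1 : unitInterval) : ℝ)) / (2 - ((1 : unitInterval) : ℝ))
            = 2 * (t : ℝ) - 1 := by rw [s1]; ring
        simp only [HFun, if_neg hc, if_neg h2, h4]
  · refine ⟨(ContinuousMap.Homotopy.symm ?_)⟩
    exact
      { toContinuousMap := Lmap x₀ U RU hRU0
        map_zero_left := fun γ => Subtype.ext (Subtype.ext (ContinuousMap.ext fun t =>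
          HFun_s0 γ t))
        map_one_left := fun γ => Subtype.ext rfl }
  · refine ⟨(ContinuousMap.Homotopy.symm ?_)⟩
    refine
      { toContinuousMap := ⟨fun p =>
          ⟨(Lmap x₀ U RU hRU0 (p.1, figureEightInclusion M x₀ U hU p.2)).1, ?_⟩, ?_⟩
        map_zero_left := fun γ => Subtype.ext (Subtype.ext (ContinuousMap.ext fun t =>
          HFun_s0 _ t))
        map_one_left := fun γ => Subtype.ext rfl }
    · show HFun x₀ U RU ((p.1, figureEightInclusion M x₀ U hU p.2), half) = x₀
      rw [HFun_half hRU0]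
      have he : (⟨(figureEightInclusion M x₀ U hU p.2).1.1 half,
          (figureEightInclusion M x₀ U hU p.2).2⟩ : U) = ⟨x₀, hU⟩ := Subtype.ext p.2.2
      rw [he]; exact hRUfix _
    · refine Continuous.subtype_mk ?_ _
      exact continuous_subtype_val.comp ((Lmap x₀ U RU hRU0).continuous.comp
        (continuous_fst.prodMk ((figureEightInclusion M x₀ U hU).continuous.comp
          continuous_snd)))
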